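/- Let (S_X, S_Z) be a CSS stabilizer code on a finite type Q satisfying the duality and intersection assumptions, let ρ be an encoded state, let α : Finset Q be tolerable, and let β ∈ S_X with β ∉ Z(G_α). Then trace(ρ · A_α · X_β · A_α†) = 0. (Lemma A4(ii).) -/

import Mathlib

open Finset
open scoped symmDiff Matrix

namespace CC

variable {Q : Type*} [Fintype Q] [DecidableEq Q]

/-- A subgroup of the abelian group `(Finset Q, ∆)`. -/
def IsSubgroup (S : Set (Finset Q)) : Prop :=
  ∅ ∈ S ∧ ∀ a ∈ S, ∀ b ∈ S, a ∆ b ∈ S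

/-- The subgroup of `(Finset Q, ∆)` generated by a set. -/
def closure (T : Set (Finset Q)) : Set (Finset Q) :=
  ⋂₀ {S : Set (Finset Q) | IsSubgroup S ∧ T ⊆ S}

/-- A CSS stabilizer code on the qubits `Q`. -/
structure CSS (Q : Type*) [Fintype Q] [DecidableEq Q] where
  SX : Set (Finset Q)
  SZ : Set (Finset Q)
  hSX : IsSubgroup SX
  hSZ : IsSubgroup SZ
  comm : ∀ a ∈ SZ, ∀ b ∈ SX, 2 ∣ (a ∩ b).card

def ZX (C : CSS Q) : Set (Finset Q) := {γ | ∀ f ∈ C.SZ, 2 ∣ (γ ∩ f).card}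

def ZZ (C : CSS Q) : Set (Finset Q) := {z | ∀ c ∈ C.SX, 2 ∣ (z ∩ c).card}

/-- Duality assumption. -/
def Dual (C : CSS Q) : Prop :=
  C.SZ = {z | ∀ γ ∈ ZX C, 2 ∣ (z ∩ γ).card} ∧
  C.SX = {c | ∀ z ∈ ZZ C, 2 ∣ (c ∩ z).card}

def LogicalX (C : CSS Q) (l : Finset Q) : Prop := l ∈ ZX C ∧ l ∉ C.SX

def LogicalZ (C : CSS Q) (l : Finset Q) : Prop := l ∈ ZZ C ∧ l ∉ C.SZ

/-- Single-logical-qubit assumption. -/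
def SingleQubit (C : CSS Q) : Prop :=
  (ZX C ≠ C.SX ∧ ∀ l l', LogicalX C l → LogicalX C l' → l ∆ l' ∈ C.SX) ∧
  (ZZ C ≠ C.SZ ∧ ∀ l l', LogicalZ C l → LogicalZ C l' → l ∆ l' ∈ C.SZ)

/-- Intersection axiom. -/
def Inter (C : CSS Q) : Prop :=
  ZZ C = {x | ∃ α ∈ ZX C, ∃ β ∈ ZX C, x = α ∩ β}

def G (C : CSS Q) (α : Finset Q) : Set (Finset Q) :=
  closure (C.SZ ∪ {x | ∃ β ∈ ZX C, x = α ∩ β})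

def H (C : CSS Q) (α : Finset Q) : Set (Finset Q) :=
  closure (C.SZ ∪ {x | ∃ β ∈ C.SX, x = α ∩ β})

def Zof (K : Set (Finset Q)) : Set (Finset Q) := {γ | ∀ h ∈ K, 2 ∣ (γ ∩ h).card}

def Tolerable (C : CSS Q) (α : Finset Q) : Prop := ∀ z ∈ G C α, ¬ LogicalZ C z

def g (b : Q → ℤ) (s : Finset Q) : ℤ := ∑ q ∈ s, b q

/-- T-invariance assumption. -/
def TInv (C : CSS Q) (b : Q → ℤ) : Prop :=
  (∀ β ∈ C.SX, (8 : ℤ) ∣ g b β) ∧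
  (∀ β ∈ C.SX, ∀ γ ∈ ZX C, (8 : ℤ) ∣ (g b β - 2 * g b (γ ∩ β)))

def E (C : CSS Q) (b : Q → ℤ) (α : Finset Q) : Set (Finset Q) :=
  {z | ∀ γ ∈ Zof (G C α), g b (γ ∩ α) ≡ 2 * ((z ∩ γ).card : ℤ) [ZMOD 4]}

/- Quantum setting -/

abbrev M (Q : Type*) [Fintype Q] [DecidableEq Q] :=
  Matrix (Q → ZMod 2) (Q → ZMod 2) ℂ

def supp (v : Q → ZMod 2) : Finset Q := Finset.univ.filter (fun q => v q = 1)

def ind (α : Finset Q) : Q → ZMod 2 := fun q => if q ∈ α then 1 else 0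

def XM (α : Finset Q) : M Q :=
  Matrix.of fun u v => if u = v + ind α then (1 : ℂ) else 0

noncomputable def ZM (α : Finset Q) : M Q :=
  Matrix.diagonal fun v => (-1 : ℂ) ^ (supp v ∩ α).card

noncomputable def AM (b : Q → ℤ) (α : Finset Q) : M Q :=
  Matrix.diagonal fun v => Complex.I ^ (g b (α ∩ supp v))

noncomputable def UM (b : Q → ℤ) : M Q :=
  Matrix.diagonal fun v => Complex.exp (Real.pi * Complex.I / 4) ^ (g b (supp v))

def Encoded (C : CSS Q) (ρ : M Q) : Prop :=
  ρ.trace = 1 ∧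
  (∀ c ∈ C.SX, XM c * ρ = ρ ∧ ρ * XM c = ρ) ∧
  (∀ f ∈ C.SZ, ZM f * ρ = ρ ∧ ρ * ZM f = ρ)

instance : Std.Commutative (α := Finset Q) (· ∆ ·) := ⟨symmDiff_comm⟩
instance : Std.Associative (α := Finset Q) (· ∆ ·) := ⟨symmDiff_assoc⟩

/-- Iterated symmetric difference over a finite index set. -/
def bigΔ {ι : Type*} (s : Finset ι) (f : ι → Finset Q) : Finset Q :=
  s.fold (· ∆ ·) ∅ f

/-! ### Auxiliary lemmas -/

lemma subset_closure' {T : Set (Finset Q)} : T ⊆ closure T :=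
  fun _x hx _S hS => hS.2 hx

lemma closure_le' {T S : Set (Finset Q)} (hS : IsSubgroup S) (hTS : T ⊆ S) :
    closure T ⊆ S := fun _x hx => hx S ⟨hS, hTS⟩

lemma g_symmDiff' (b : Q → ℤ) (s t : Finset Q) :
    g b (s ∆ t) = g b s + g b t - 2 * g b (s ∩ t) := by
  have h2 : Disjoint (s ∆ t) (s ∩ t) := by
    rw [Finset.disjoint_left]
    intro q hq hq'
    rw [Finset.mem_symmDiff] at hq
    rw [Finset.mem_inter] at hq'
    tauto
  have h3 : (s ∆ t) ∪ (s ∩ t) = s ∪ t := by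
    ext q; simp only [Finset.mem_union, Finset.mem_symmDiff, Finset.mem_inter]; tauto
  have h4 := Finset.sum_union h2 (f := b)
  rw [h3] at h4
  have h5 := Finset.sum_union_inter (s₁ := s) (s₂ := t) (f := b)
  unfold g at *
  linarith

lemma card_symmDiff' (s t : Finset Q) :
    ((s ∆ t).card : ℤ) = (s.card : ℤ) + t.card - 2 * (s ∩ t).card := by
  have := g_symmDiff' (fun _ => (1:ℤ)) s t
  simpa [g] using this

lemma odd_g {b : Q → ℤ} (hb : ∀ q, Odd (b q)) {s : Finset Q}
    (hs : ¬ 2 ∣ s.card) : Odd (g b s) := by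
  have hmod : g b s % 2 = (s.card : ℤ) % 2 := by
    unfold g
    rw [Finset.sum_int_mod]
    have : ∀ q ∈ s, b q % 2 = 1 % 2 := by
      intro q _
      have := Int.odd_iff.mp (hb q)
      omega
    rw [Finset.sum_congr rfl this]
    simp [Finset.sum_const, mul_comm]
  rw [Int.odd_iff, hmod]
  omega

/-- Key combinatorial step: if `β ∉ Z(G_α)` and `α` is tolerable, then `α ∩ β` fails to
commute with some `X`-stabilizer. -/
lemma exists_X_stab_odd (C : CSS Q) (α : Finset Q) (htol : Tolerable C α)
    (β : Finset Q) (hβ : β ∈ C.SX) (hβ' : β ∉ Zof (G C α)) :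
    ∃ c ∈ C.SX, ¬ 2 ∣ ((α ∩ β) ∩ c).card := by
  by_contra h
  push_neg at h
  have hZZ : α ∩ β ∈ ZZ C := fun c hc => h c hc
  have hβZX : β ∈ ZX C := by
    intro f hf
    rw [Finset.inter_comm]
    exact C.comm f hf β hβ
  have hgen : α ∩ β ∈ G C α :=
    subset_closure' (Or.inr ⟨β, hβZX, rfl⟩)
  have hSZ : α ∩ β ∈ C.SZ := by
    by_contra hne
    exact htol _ hgen ⟨hZZ, hne⟩
  -- now show β ∈ Zof (G C α), contradiction
  apply hβ'
  intro hset hmem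
  have hsub0 : IsSubgroup {h : Finset Q | 2 ∣ (β ∩ h).card} := by
    constructor
    · simp
    · intro a ha b hb
      have hdist : β ∩ (a ∆ b) = (β ∩ a) ∆ (β ∩ b) := by
        ext q
        simp only [Finset.mem_inter, Finset.mem_symmDiff]
        tauto
      simp only [Set.mem_setOf_eq] at *
      rw [hdist]
      have := card_symmDiff' (β ∩ a) (β ∩ b)
      omega
  have hTS : C.SZ ∪ {x | ∃ γ ∈ ZX C, x = α ∩ γ} ⊆ {h : Finset Q | 2 ∣ (β ∩ h).card} := by
    rintro x (hx | ⟨γ, hγ, rfl⟩)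
    · have := C.comm x hx β hβ
      rwa [Finset.inter_comm] at this
    · have hxe : β ∩ (α ∩ γ) = γ ∩ (α ∩ β) := by
        ext q
        simp only [Finset.mem_inter]
        tauto
      simp only [Set.mem_setOf_eq]
      rw [hxe]
      exact hγ _ hSZ
  exact closure_le' hsub0 hTS hmem

lemma add_ind_add_ind (u : Q → ZMod 2) (c : Finset Q) : u + ind c + ind c = u := by
  funext q
  show u q + ind c q + ind c q = u q
  generalize u q = x
  generalize ind c q = y
  revert x y
  decide

lemma supp_add_ind (v : Q → ZMod 2) (c : Finset Q) : supp (v + ind c) = supp v ∆ c := by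
  ext q
  rw [supp, supp, Finset.mem_symmDiff, Finset.mem_filter, Finset.mem_filter]
  simp only [supp, ind, Finset.mem_filter, Finset.mem_univ, true_and, Finset.mem_symmDiff,
    Pi.add_apply]
  by_cases hq : q ∈ c <;> simp [hq] <;>
    (try (generalize v q = x; revert x; decide))

lemma XM_mul_apply (c : Finset Q) (N : M Q) (u v : Q → ZMod 2) :
    (XM c * N) u v = N (u + ind c) v := by
  have hcond : ∀ w : Q → ZMod 2, (u = w + ind c) ↔ (w = u + ind c) := by
    intro w
    constructor
    · rintro rfl; rw [add_ind_add_ind]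
    · rintro rfl; rw [add_ind_add_ind]
  simp only [Matrix.mul_apply, XM, Matrix.of_apply, ite_mul, one_mul, zero_mul]
  simp only [hcond]
  rw [Finset.sum_ite_eq' Finset.univ (u + ind c) (fun w => N w v)]
  simp

lemma mul_XM_apply (c : Finset Q) (N : M Q) (u v : Q → ZMod 2) :
    (N * XM c) u v = N u (v + ind c) := by
  have hcond : ∀ w : Q → ZMod 2, (w = v + ind c) ↔ (w = v + ind c) := fun _ => Iff.rfl
  simp only [Matrix.mul_apply, XM, Matrix.of_apply, mul_ite, mul_one, mul_zero]
  rw [Finset.sum_ite_eq' Finset.univ (v + ind c) (fun w => N u w)]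
  simp

lemma star_I_zpow (n : ℤ) : star (Complex.I ^ n) = Complex.I ^ (-n) := by
  rw [show star (Complex.I ^ n) = (starRingEnd ℂ) (Complex.I ^ n) from rfl, map_zpow₀,
    Complex.conj_I, ← Complex.inv_I, inv_zpow, zpow_neg]

lemma I_zpow_two_mul (k : ℤ) : Complex.I ^ (2 * k) = ((-1 : ℂ)) ^ k := by
  rw [zpow_mul]; congr 1
  rw [show (2:ℤ) = ((2:ℕ):ℤ) from rfl, zpow_natCast, Complex.I_sq]

lemma AXA_apply (b : Q → ℤ) (α β : Finset Q) (u v : Q → ZMod 2) :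
    (AM b α * XM β * (AM b α)ᴴ) u v =
      if u = v + ind β then
        Complex.I ^ (g b (α ∩ supp u) - g b (α ∩ supp v)) else 0 := by
  have hAM : AM b α = Matrix.diagonal (fun v => Complex.I ^ (g b (α ∩ supp v))) := rfl
  rw [hAM, Matrix.diagonal_conjTranspose, Matrix.mul_diagonal, Matrix.diagonal_mul,
    Pi.star_apply, star_I_zpow]
  simp only [XM, Matrix.of_apply, mul_ite, ite_mul, mul_one, mul_zero, one_mul, zero_mul]
  rw [← zpow_add₀ Complex.I_ne_zero, ← sub_eq_add_neg]

lemma key_scalar {b : Q → ℤ} (hb : ∀ q, Odd (b q)) (α β c sv : Finset Q)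
    (hodd : ¬ 2 ∣ ((α ∩ β) ∩ c).card) :
    Complex.I ^ (g b (α ∩ ((sv ∆ β) ∆ c)) - g b (α ∩ (sv ∆ c)))
      = -(Complex.I ^ (g b (α ∩ (sv ∆ β)) - g b (α ∩ sv))) := by
  set A := α ∩ (sv ∆ β) with hA
  set B := α ∩ sv with hB
  set Cc := α ∩ c with hC
  set D := α ∩ β with hD
  have e1 : α ∩ ((sv ∆ β) ∆ c) = A ∆ Cc := by
    ext q
    simp only [hA, hC, Finset.mem_inter, Finset.mem_symmDiff]
    tauto
  have e2 : α ∩ (sv ∆ c) = B ∆ Cc := by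
    ext q
    simp only [hB, hC, Finset.mem_inter, Finset.mem_symmDiff]
    tauto
  have e3 : A = B ∆ D := by
    ext q
    simp only [hA, hB, hD, Finset.mem_inter, Finset.mem_symmDiff]
    tauto
  have e4 : A ∩ Cc = (B ∩ Cc) ∆ (D ∩ Cc) := by
    rw [e3]
    ext q
    simp only [Finset.mem_inter, Finset.mem_symmDiff]
    tauto
  have e5 : D ∩ Cc = (α ∩ β) ∩ c := by
    ext q
    simp only [hD, hC, Finset.mem_inter]
    tauto
  have hoddD : Odd (g b (D ∩ Cc)) := by
    rw [e5]; exact odd_g hb hodd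
  have hkey : g b (α ∩ ((sv ∆ β) ∆ c)) - g b (α ∩ (sv ∆ c)) =
      (g b A - g b B) + 2 * (g b (B ∩ Cc) - g b (A ∩ Cc)) := by
    rw [e1, e2, g_symmDiff' b A Cc, g_symmDiff' b B Cc]
    ring
  have hoddk : Odd (g b (B ∩ Cc) - g b (A ∩ Cc)) := by
    have := g_symmDiff' b (B ∩ Cc) (D ∩ Cc)
    rw [← e4] at this
    rcases hoddD with ⟨m, hm⟩
    exact ⟨g b ((B ∩ Cc) ∩ (D ∩ Cc)) - m - 1, by linarith⟩
  rw [hkey, zpow_add₀ Complex.I_ne_zero, I_zpow_two_mul, Odd.neg_one_zpow hoddk]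
  ring

lemma conj_AXA (b : Q → ℤ) (hb : ∀ q, Odd (b q)) (α β c : Finset Q)
    (hodd : ¬ 2 ∣ ((α ∩ β) ∩ c).card) :
    XM c * (AM b α * XM β * (AM b α)ᴴ) * XM c = -(AM b α * XM β * (AM b α)ᴴ) := by
  ext u v
  rw [Matrix.neg_apply, mul_XM_apply, XM_mul_apply, AXA_apply, AXA_apply]
  have hcond : (u + ind c = v + ind c + ind β) ↔ (u = v + ind β) := by
    constructor
    · intro h
      have := congrArg (· + ind c) h
      rw [add_ind_add_ind] at this
      rw [this]
      funext q
      show v q + ind c q + ind β q + ind c q = v q + ind β q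
      generalize v q = x; generalize ind c q = y; generalize ind β q = z
      revert x y z; decide
    · rintro rfl
      funext q
      show v q + ind β q + ind c q = v q + ind c q + ind β q
      generalize v q = x; generalize ind c q = y; generalize ind β q = z
      revert x y z; decide
  by_cases h : u = v + ind β
  · rw [if_pos (hcond.mpr h), if_pos h]
    subst h
    rw [supp_add_ind, supp_add_ind, supp_add_ind]
    exact key_scalar hb α β c (supp v) hodd
  · rw [if_neg (fun hh => h (hcond.mp hh)), if_neg h]
    simp

/-- Lemma A4(ii): for tolerable `α` and `β ∈ S_X` with `β ∉ Z(G_α)`, the expectation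
value `⟨A_α X_β A_α†⟩_ρ` vanishes. -/
theorem expectation_noncommuting_stabilizer
    (C : CSS Q) (b : Q → ℤ) (hb : ∀ q, Odd (b q))
    (hdual : Dual C) (hinter : Inter C)
    (ρ : M Q) (hρ : Encoded C ρ)
    (α : Finset Q) (htol : Tolerable C α)
    (β : Finset Q) (hβ : β ∈ C.SX) (hβ' : β ∉ Zof (G C α)) :
    (ρ * (AM b α * XM β * (AM b α)ᴴ)).trace = 0 := by
  obtain ⟨c, hc, hcodd⟩ := exists_X_stab_odd C α htol β hβ hβ'
  set N := AM b α * XM β * (AM b α)ᴴ with hNdef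
  have hN : XM c * N * XM c = -N := conj_AXA b hb α β c hcodd
  obtain ⟨-, hX, -⟩ := hρ
  obtain ⟨h1, h2⟩ := hX c hc
  have hA : (ρ * (XM c * N * XM c)).trace = -((ρ * N).trace) := by
    rw [hN, Matrix.mul_neg, Matrix.trace_neg]
  have hB : (ρ * (XM c * N * XM c)).trace = (ρ * N).trace := by
    simp only [← mul_assoc]
    rw [Matrix.trace_mul_comm]
    simp only [← mul_assoc]
    rw [h1, h2]
  have hx : (ρ * N).trace = -((ρ * N).trace) := hB.symm.trans hA
  have h2t : (2 : ℂ) * (ρ * N).trace = 0 := by linear_combination hx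
  have := mul_eq_zero.mp h2t
  rcases this with h | h
  · exact absurd h two_ne_zero
  · exact h

end CC
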